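/- Let R > 0, let μ be a probability measure on ℝ supported in [−R, R], let δ > 0, and let p_δ be the density of μ * γ_δ. Then for every x ≥ R, ∫_R^x (1/p_δ(t)) dt ≤ 2δ(x − R) / (((x − R)² + δ) · p_δ(x)). -/

import Mathlib

open MeasureTheory Real

/-- Density of the convolution μ * γ_δ on ℝ:
p_δ(t) = ∫ (2πδ)^{-1/2} exp(−(t−s)²/(2δ)) dμ(s). -/
noncomputable def pdelta (δ : ℝ) (μ : Measure ℝ) (t : ℝ) : ℝ :=
  ∫ s, (Real.sqrt (2 * π * δ))⁻¹ * Real.exp (-((t - s) ^ 2) / (2 * δ)) ∂μ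

open intervalIntegral
lemma lemC (δ : ℝ) (hδ : 0 < δ) (a : ℝ) (ha : 0 ≤ a) :
    ∫ u in (0:ℝ)..a, Real.exp (u^2/(2*δ)) ≤ 2*δ*a/(a^2+δ) * Real.exp (a^2/(2*δ)) := by
  set F : ℝ → ℝ := fun a => 2*δ*a/(a^2+δ) * Real.exp (a^2/(2*δ)) - ∫ u in (0:ℝ)..a, Real.exp (u^2/(2*δ)) with hF
  have hcont : Continuous fun u : ℝ => Real.exp (u^2/(2*δ)) := by continuity
  have hne : ∀ b : ℝ, b^2 + δ ≠ 0 := fun b => by positivity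
  have hD : ∀ b : ℝ, HasDerivAt F
      ((2*δ*(b^2+δ) - 2*δ*b*(2*b))/(b^2+δ)^2 * Real.exp (b^2/(2*δ))
        + 2*δ*b/(b^2+δ) * (Real.exp (b^2/(2*δ)) * (2*b/(2*δ)))
        - Real.exp (b^2/(2*δ))) b := by
    intro b
    have h1 : HasDerivAt (fun b : ℝ => 2*δ*b) (2*δ) b := by
      simpa using (hasDerivAt_id b).const_mul (2*δ)
    have h2 : HasDerivAt (fun b : ℝ => b^2 + δ) (2*b) b := by
      simpa using (hasDerivAt_pow 2 b).add_const δ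
    have hinner : HasDerivAt (fun b : ℝ => b^2/(2*δ)) (2*b/(2*δ)) b := by
      simpa using (hasDerivAt_pow 2 b).div_const (2*δ)
    have hexp := hinner.exp
    have hdiv := h1.div h2 (hne b)
    have hmul := hdiv.mul hexp
    have hint : HasDerivAt (fun b : ℝ => ∫ u in (0:ℝ)..b, Real.exp (u^2/(2*δ)))
        (Real.exp (b^2/(2*δ))) b :=
      integral_hasDerivAt_right (hcont.intervalIntegrable _ _)
        (hcont.stronglyMeasurableAtFilter _ _) hcont.continuousAt
    exact hmul.sub hint
  have hmono : MonotoneOn F (Set.Ici (0:ℝ)) := by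
    apply monotoneOn_of_deriv_nonneg (convex_Ici 0)
    · exact fun b _ => ((hD b).continuousAt.continuousWithinAt)
    · exact fun b _ => (hD b).differentiableAt.differentiableWithinAt
    · intro b _
      rw [(hD b).deriv]
      have he : 0 < Real.exp (b^2/(2*δ)) := Real.exp_pos _
      have h2 : 0 < b^2 + δ := by positivity
      have h5 : 2*δ*b/(b^2+δ) * (Real.exp (b^2/(2*δ)) * (2*b/(2*δ)))
          = 2*b^2/(b^2+δ) * Real.exp (b^2/(2*δ)) := by
        field_simp
      rw [h5, div_mul_eq_mul_div, div_mul_eq_mul_div, div_add_div _ _ (by positivity) (hne b),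
        sub_nonneg, le_div_iff₀ (by positivity)]
      nlinarith [sq_nonneg (b^2 - δ), he.le, mul_pos h2 h2, mul_pos (mul_pos h2 h2) h2,
        mul_nonneg (mul_nonneg he.le (sq_nonneg (b^2-δ))) h2.le]
  have h0 : F 0 = 0 := by simp [hF]
  have := hmono (Set.self_mem_Ici) (Set.mem_Ici.2 ha) ha
  rw [h0] at this
  simpa [hF, sub_nonneg] using this

lemma integ_pdelta (δ : ℝ) (hδ : 0 < δ) (μ : Measure ℝ) [IsFiniteMeasure μ] (t : ℝ) :
    Integrable (fun s => (Real.sqrt (2 * π * δ))⁻¹ * Real.exp (-((t - s) ^ 2) / (2 * δ))) μ := by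
  apply Integrable.mono' (integrable_const ((Real.sqrt (2 * π * δ))⁻¹))
  · exact (Continuous.aestronglyMeasurable (by continuity))
  · refine Filter.Eventually.of_forall fun s => ?_
    have h1 : 0 < (Real.sqrt (2 * π * δ))⁻¹ := by
      rw [inv_pos]
      exact Real.sqrt_pos.2 (by positivity)
    rw [norm_mul, Real.norm_eq_abs, Real.norm_eq_abs, abs_of_pos h1,
      abs_of_pos (Real.exp_pos _)]
    nth_rewrite 2 [← mul_one ((Real.sqrt (2 * π * δ))⁻¹)]
    have : Real.exp (-((t - s) ^ 2) / (2 * δ)) ≤ 1 := by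
      rw [Real.exp_le_one_iff]
      have : 0 ≤ (t - s)^2 / (2*δ) := by positivity
      rw [neg_div]
      linarith
    exact mul_le_mul_of_nonneg_left this h1.le

lemma pdelta_pos (R δ : ℝ) (hR : 0 < R) (hδ : 0 < δ)
    (μ : Measure ℝ) [IsProbabilityMeasure μ] (hsupp : μ (Set.Icc (-R) R)ᶜ = 0) (t : ℝ) :
    0 < pdelta δ μ t := by
  have h1 : 0 < (Real.sqrt (2 * π * δ))⁻¹ := by
    rw [inv_pos]; exact Real.sqrt_pos.2 (by positivity)
  have hμIcc : μ (Set.Icc (-R) R) = 1 := by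
    have := measure_add_measure_compl (μ := μ) (s := Set.Icc (-R) R) measurableSet_Icc
    rw [hsupp, add_zero] at this
    simp [this]
  set c : ℝ := (Real.sqrt (2 * π * δ))⁻¹ * Real.exp (-((|t| + R) ^ 2) / (2 * δ)) with hc
  have hcpos : 0 < c := by positivity
  have hle : c * (μ (Set.Icc (-R) R)).toReal
      ≤ ∫ s in Set.Icc (-R) R, (Real.sqrt (2 * π * δ))⁻¹ * Real.exp (-((t - s) ^ 2) / (2 * δ)) ∂μ := by
    show c * μ.real (Set.Icc (-R) R) ≤ _
    apply setIntegral_ge_of_const_le_real measurableSet_Icc (measure_ne_top μ _)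
    · intro s hs
      rw [hc]
      apply mul_le_mul_of_nonneg_left _ h1.le
      apply Real.exp_le_exp.2
      rw [div_le_div_iff_of_pos_right (by positivity), neg_le_neg_iff]
      have h2 := hs.1
      have h3 := hs.2
      have h4 := abs_le.1 (le_refl |t|)
      nlinarith [neg_abs_le t, le_abs_self t]
    · exact (integ_pdelta δ hδ μ t).integrableOn
  have hset : ∫ s in Set.Icc (-R) R, (Real.sqrt (2 * π * δ))⁻¹ * Real.exp (-((t - s) ^ 2) / (2 * δ)) ∂μ
      ≤ pdelta δ μ t := by
    apply setIntegral_le_integral (integ_pdelta δ hδ μ t)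
    exact Filter.Eventually.of_forall fun s => by positivity
  have : c * (μ (Set.Icc (-R) R)).toReal = c := by rw [hμIcc]; simp
  calc 0 < c := hcpos
    _ = c * (μ (Set.Icc (-R) R)).toReal := this.symm
    _ ≤ _ := hle
    _ ≤ _ := hset

lemma pdelta_ge (R δ : ℝ) (hδ : 0 < δ)
    (μ : Measure ℝ) [IsProbabilityMeasure μ] (hsupp : μ (Set.Icc (-R) R)ᶜ = 0)
    (t x : ℝ) (htx : t ≤ x) :
    Real.exp (((x-R)^2 - (t-R)^2)/(2*δ)) * pdelta δ μ x ≤ pdelta δ μ t := by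
  set K := Real.exp (((x-R)^2 - (t-R)^2)/(2*δ)) with hK
  have hrw : K * pdelta δ μ x
      = ∫ s, K * ((Real.sqrt (2 * π * δ))⁻¹ * Real.exp (-((x - s) ^ 2) / (2 * δ))) ∂μ := by
    rw [pdelta]; exact (MeasureTheory.integral_const_mul K _).symm
  rw [hrw, pdelta]
  apply integral_mono_ae ((integ_pdelta δ hδ μ x).const_mul K) (integ_pdelta δ hδ μ t)
  rw [Filter.EventuallyLE, ae_iff]
  apply measure_mono_null _ hsupp
  intro s hs
  simp only [Set.mem_setOf_eq, not_le] at hs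
  simp only [Set.mem_compl_iff, Set.mem_Icc, not_and_or, not_le]
  by_contra hcon
  push_neg at hcon
  have hsR : s ≤ R := hcon.2
  have key : K * ((Real.sqrt (2 * π * δ))⁻¹ * Real.exp (-((x - s) ^ 2) / (2 * δ)))
      ≤ (Real.sqrt (2 * π * δ))⁻¹ * Real.exp (-((t - s) ^ 2) / (2 * δ)) := by
    have h1 : 0 < (Real.sqrt (2 * π * δ))⁻¹ := by
      rw [inv_pos]; exact Real.sqrt_pos.2 (by positivity)
    rw [hK, mul_left_comm, ← Real.exp_add]
    apply mul_le_mul_of_nonneg_left _ h1.le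
    rw [Real.exp_le_exp, ← add_div, div_le_div_iff_of_pos_right (by positivity)]
    nlinarith [mul_nonneg (sub_nonneg.2 htx) (sub_nonneg.2 hsR)]
  exact absurd key (not_le.2 hs)

theorem stmt10 (R δ : ℝ) (hR : 0 < R) (hδ : 0 < δ)
    (μ : Measure ℝ) [IsProbabilityMeasure μ] (hsupp : μ (Set.Icc (-R) R)ᶜ = 0) :
    ∀ x : ℝ, R ≤ x →
      ∫ t in R..x, (pdelta δ μ t)⁻¹ ≤
        2 * δ * (x - R) / (((x - R) ^ 2 + δ) * pdelta δ μ x) := by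
  intro x hx
  have hpx : 0 < pdelta δ μ x := pdelta_pos R δ hR hδ μ hsupp x
  have ha : 0 ≤ x - R := sub_nonneg.2 hx
  have hrhs : 0 ≤ 2 * δ * (x - R) / (((x - R) ^ 2 + δ) * pdelta δ μ x) := by positivity
  by_cases hint : IntervalIntegrable (fun t => (pdelta δ μ t)⁻¹) volume R x
  · set g : ℝ → ℝ := fun t =>
      Real.exp ((t-R)^2/(2*δ)) * (Real.exp (-((x-R)^2)/(2*δ)) * (pdelta δ μ x)⁻¹) with hg
    have hgcont : Continuous g := by continuity
    have hfg : ∀ t ∈ Set.Icc R x, (pdelta δ μ t)⁻¹ ≤ g t := by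
      intro t ht
      have hpt := pdelta_pos R δ hR hδ μ hsupp t
      have hge := pdelta_ge R δ hδ μ hsupp t x ht.2
      have hKpos : 0 < Real.exp (((x-R)^2 - (t-R)^2)/(2*δ)) * pdelta δ μ x := by positivity
      have := inv_anti₀ hKpos hge
      rw [mul_inv, ← Real.exp_neg] at this
      calc (pdelta δ μ t)⁻¹ ≤ Real.exp (-(((x-R)^2 - (t-R)^2)/(2*δ))) * (pdelta δ μ x)⁻¹ := this
        _ = g t := by
          show _ = Real.exp ((t-R)^2/(2*δ)) * (Real.exp (-((x-R)^2)/(2*δ)) * (pdelta δ μ x)⁻¹)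
          rw [← mul_assoc, ← Real.exp_add]
          congr 2
          ring
    have hle := integral_mono_on hx hint (hgcont.intervalIntegrable R x) hfg
    refine hle.trans ?_
    have h1 : ∫ t in R..x, g t =
        (∫ t in R..x, Real.exp ((t-R)^2/(2*δ))) * (Real.exp (-((x-R)^2)/(2*δ)) * (pdelta δ μ x)⁻¹) := by
      rw [hg, intervalIntegral.integral_mul_const]
    have h2 : ∫ t in R..x, Real.exp ((t-R)^2/(2*δ)) = ∫ u in (0:ℝ)..(x-R), Real.exp (u^2/(2*δ)) := by
      simpa using intervalIntegral.integral_comp_sub_right (a := R) (b := x)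
        (fun u => Real.exp (u^2/(2*δ))) R
    rw [h1, h2]
    have h3 := lemC δ hδ (x-R) ha
    have hc : 0 ≤ Real.exp (-((x-R)^2)/(2*δ)) * (pdelta δ μ x)⁻¹ := by positivity
    calc (∫ u in (0:ℝ)..(x-R), Real.exp (u^2/(2*δ))) * (Real.exp (-((x-R)^2)/(2*δ)) * (pdelta δ μ x)⁻¹)
        ≤ (2*δ*(x-R)/((x-R)^2+δ) * Real.exp ((x-R)^2/(2*δ))) * (Real.exp (-((x-R)^2)/(2*δ)) * (pdelta δ μ x)⁻¹) :=
          mul_le_mul_of_nonneg_right h3 hc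
      _ = 2 * δ * (x - R) / (((x - R) ^ 2 + δ) * pdelta δ μ x) := by
          have hee : Real.exp ((x-R)^2/(2*δ)) * Real.exp (-(x-R)^2/(2*δ)) = 1 := by
            rw [← Real.exp_add, show (x-R)^2/(2*δ) + -(x-R)^2/(2*δ) = 0 by ring, Real.exp_zero]
          rw [mul_assoc, ← mul_assoc (Real.exp ((x-R)^2/(2*δ))), hee, one_mul,
            div_mul_eq_div_div, div_eq_mul_inv]
          ring
  · rw [intervalIntegral.integral_undef hint]
    exact hrhs
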